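/- Let v ∈ {±1}^n have at most ℓ sign changes, with n = 2^m. Then Σ_{i∈T} Σ_{j=0}^{2^i-1} 2^{-(m-i)/2}·|⟨ψ_{i,j}, v⟩| ≤ ℓ·log₂(n) + 1, where T indexes all levels of the Haar basis (including father and mother wavelets at level 0). -/

import Mathlib

open Finset
open scoped Classical

/-- Entry of the orthonormal Haar wavelet matrix on `ℝ^(2^m)`.
Row `0` is the father wavelet; for `r ≥ 1`, writing `r = 2^i + j` with `0 ≤ j < 2^i`,
row `r` is the wavelet `ψ_{i,j}` (row `1` is the mother wavelet). -/
noncomputable def haarEntry (m r x : ℕ) : ℝ :=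
  if r = 0 then (2 : ℝ) ^ (-(m : ℝ) / 2)
  else
    let i := Nat.log 2 r
    let j := r - 2 ^ i
    if 2 ^ (m - i) * j ≤ x ∧ x < 2 ^ (m - i) * j + 2 ^ (m - i - 1) then
      (2 : ℝ) ^ (-((m : ℝ) - (i : ℝ)) / 2)
    else if 2 ^ (m - i) * j + 2 ^ (m - i - 1) ≤ x ∧ x < 2 ^ (m - i) * (j + 1) then
      -((2 : ℝ) ^ (-((m : ℝ) - (i : ℝ)) / 2))
    else 0

/-- The weight `2^{-(m-i)/2}` associated to the row `r` of the Haar matrix, where `i` is the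
level of the wavelet in row `r` (the father wavelet, row `0`, has level `0`). -/
noncomputable def haarWeight (m r : ℕ) : ℝ :=
  if r = 0 then (2 : ℝ) ^ (-(m : ℝ) / 2)
  else (2 : ℝ) ^ (-((m : ℝ) - (Nat.log 2 r : ℝ)) / 2)

/-- The number of sign changes of `v` on `{0, ..., n-1}`. -/
noncomputable def signChanges (n : ℕ) (v : ℕ → ℝ) : ℕ :=
  ((Finset.range (n - 1)).filter (fun i => v (i + 1) ≠ v i)).card

lemma rpow_half_sq (k : ℕ) : (2:ℝ)^(-(k:ℝ)/2) * (2:ℝ)^(-(k:ℝ)/2) * (2^k : ℝ) = 1 := by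
  rw [← Real.rpow_add two_pos, show -(k:ℝ)/2 + -(k:ℝ)/2 = -(k:ℝ) by ring,
    Real.rpow_neg (by norm_num), ← Real.rpow_natCast 2 k]
  exact inv_mul_cancel₀ (by positivity)

lemma const_of_no_change (v : ℕ → ℝ) (a b : ℕ)
    (h : ∀ y, a ≤ y → y + 1 < b → v (y+1) = v y) :
    ∀ x, a ≤ x → x < b → v x = v a := by
  intro x
  induction x with
  | zero => intro hx _; have : a = 0 := by omega
            rw [this]
  | succ n ih =>
    intro h1 h2
    rcases Nat.lt_or_ge a (n+1) with hlt | hge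
    · rw [h n (by omega) h2, ih (by omega) (by omega)]
    · have : a = n+1 := by omega
      rw [this]

lemma ip_formula (v : ℕ → ℝ) (m i j r : ℕ) (hi : Nat.log 2 r = i) (hj : r = 2^i + j)
    (hjlt : j < 2^i) (him : i < m) :
    ∑ x ∈ Finset.range (2^m), haarEntry m r x * v x
      = (2:ℝ)^(-((m:ℝ)-(i:ℝ))/2) *
        ((∑ x ∈ Finset.Ico (2^(m-i)*j) (2^(m-i)*j + 2^(m-i-1)), v x)
         - ∑ x ∈ Finset.Ico (2^(m-i)*j + 2^(m-i-1)) (2^(m-i)*j + 2^(m-i)), v x) := by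
  have h2i : 0 < 2^i := by positivity
  have hr0 : r ≠ 0 := by omega
  have hpow : 2^(m-i-1) + 2^(m-i-1) = 2^(m-i) := by
    have h : 2^(m-i) = 2^(m-i-1) * 2 := by
      rw [← pow_succ]; congr 1; omega
    omega
  have hb : 2^(m-i)*j + 2^(m-i) ≤ 2^m := by
    have h1 : 2^(m-i)*j + 2^(m-i) = 2^(m-i)*(j+1) := by ring
    rw [h1]
    calc 2^(m-i)*(j+1) ≤ 2^(m-i)*2^i := Nat.mul_le_mul_left _ (by omega)
      _ = 2^m := by rw [← pow_add]; congr 1; omega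
  have hEntry : ∀ x, haarEntry m r x =
      if 2 ^ (m - i) * j ≤ x ∧ x < 2 ^ (m - i) * j + 2 ^ (m - i - 1) then
        (2 : ℝ) ^ (-((m : ℝ) - (i : ℝ)) / 2)
      else if 2 ^ (m - i) * j + 2 ^ (m - i - 1) ≤ x ∧ x < 2 ^ (m - i) * j + 2 ^ (m - i) then
        -((2 : ℝ) ^ (-((m : ℝ) - (i : ℝ)) / 2))
      else 0 := by
    intro x
    simp only [haarEntry, hr0, if_false, hi]
    have hjj : r - 2^i = j := by omega
    rw [hjj]
    have : 2^(m-i) * (j+1) = 2^(m-i)*j + 2^(m-i) := by ring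
    rw [this]
  set a := 2^(m-i)*j with ha
  set c := (2:ℝ)^(-((m:ℝ)-(i:ℝ))/2) with hc
  have hsub : Finset.Ico a (a + 2^(m-i)) ⊆ Finset.range (2^m) := by
    intro x hx
    simp only [mem_Ico, mem_range] at *
    omega
  have hle1 : a ≤ a + 2^(m-i-1) := Nat.le_add_right _ _
  have hle2 : a + 2^(m-i-1) ≤ a + 2^(m-i) := by omega
  rw [← Finset.sum_subset hsub]
  · rw [← Finset.sum_Ico_consecutive (fun x => haarEntry m r x * v x) hle1 hle2]
    have h1 : ∑ x ∈ Finset.Ico a (a + 2^(m-i-1)), haarEntry m r x * v x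
        = c * ∑ x ∈ Finset.Ico a (a + 2^(m-i-1)), v x := by
      rw [Finset.mul_sum]
      refine Finset.sum_congr rfl fun x hx => ?_
      simp only [mem_Ico] at hx
      rw [hEntry x, if_pos ⟨hx.1, hx.2⟩]
    have h2 : ∑ x ∈ Finset.Ico (a + 2^(m-i-1)) (a + 2^(m-i)), haarEntry m r x * v x
        = -(c * ∑ x ∈ Finset.Ico (a + 2^(m-i-1)) (a + 2^(m-i)), v x) := by
      rw [Finset.mul_sum, ← Finset.sum_neg_distrib]
      refine Finset.sum_congr rfl fun x hx => ?_
      simp only [mem_Ico] at hx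
      rw [hEntry x, if_neg (by omega), if_pos ⟨hx.1, hx.2⟩]
      ring
    rw [h1, h2]; ring
  · intro x hx hnx
    simp only [mem_Ico, mem_range, not_and, not_le, not_lt] at hx hnx
    rw [hEntry x, if_neg (by omega), if_neg (by omega), zero_mul]

lemma row_bound (v : ℕ → ℝ) (m i j r : ℕ) (hv : ∀ x < 2^m, |v x| = 1)
    (hi : Nat.log 2 r = i) (hj : r = 2^i + j) (hjlt : j < 2^i) (him : i < m) :
    haarWeight m r * |∑ x ∈ Finset.range (2^m), haarEntry m r x * v x| ≤ 1 := by
  have h2i : 0 < 2^i := by positivity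
  have hr0 : r ≠ 0 := by omega
  have hpow : 2^(m-i-1) + 2^(m-i-1) = 2^(m-i) := by
    have h : 2^(m-i) = 2^(m-i-1) * 2 := by rw [← pow_succ]; congr 1; omega
    omega
  have hb : 2^(m-i)*j + 2^(m-i) ≤ 2^m := by
    have h1 : 2^(m-i)*j + 2^(m-i) = 2^(m-i)*(j+1) := by ring
    rw [h1]
    calc 2^(m-i)*(j+1) ≤ 2^(m-i)*2^i := Nat.mul_le_mul_left _ (by omega)
      _ = 2^m := by rw [← pow_add]; congr 1; omega
  have h2a : 0 < 2^(m-i-1) := by positivity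
  have h2b : 0 < 2^(m-i) := by positivity
  rw [ip_formula v m i j r hi hj hjlt him]
  set a := 2^(m-i)*j with ha
  set c := (2:ℝ)^(-((m:ℝ)-(i:ℝ))/2) with hc
  have hcpos : 0 < c := Real.rpow_pos_of_pos (by norm_num) _
  have hw : haarWeight m r = c := by simp only [haarWeight, if_neg hr0, hi, hc]
  have habsum : ∀ (a' b' : ℕ), b' ≤ 2^m →
      |∑ x ∈ Finset.Ico a' b', v x| ≤ (b' - a' : ℕ) := by
    intro a' b' hb'
    calc |∑ x ∈ Finset.Ico a' b', v x| ≤ ∑ x ∈ Finset.Ico a' b', |v x| :=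
          Finset.abs_sum_le_sum_abs _ _
      _ = ∑ x ∈ Finset.Ico a' b', (1:ℝ) := by
          refine Finset.sum_congr rfl fun x hx => ?_
          simp only [mem_Ico] at hx
          exact hv x (by omega)
      _ = (b' - a' : ℕ) := by simp
  have hD : |(∑ x ∈ Finset.Ico a (a + 2^(m-i-1)), v x)
      - ∑ x ∈ Finset.Ico (a + 2^(m-i-1)) (a + 2^(m-i)), v x| ≤ (2^(m-i) : ℕ) := by
    have h1 := habsum a (a + 2^(m-i-1)) (by omega)
    have h2 := habsum (a + 2^(m-i-1)) (a + 2^(m-i)) (by omega)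
    have e1 : ((a + 2^(m-i-1) - a : ℕ) : ℝ) = ((2^(m-i-1) : ℕ) : ℝ) := by
      congr 1; omega
    have e2 : ((a + 2^(m-i) - (a + 2^(m-i-1)) : ℕ) : ℝ) = ((2^(m-i-1) : ℕ) : ℝ) := by
      congr 1; omega
    rw [e1] at h1; rw [e2] at h2
    calc |(∑ x ∈ Finset.Ico a (a + 2^(m-i-1)), v x)
        - ∑ x ∈ Finset.Ico (a + 2^(m-i-1)) (a + 2^(m-i)), v x|
        ≤ |∑ x ∈ Finset.Ico a (a + 2^(m-i-1)), v x|
          + |∑ x ∈ Finset.Ico (a + 2^(m-i-1)) (a + 2^(m-i)), v x| := abs_sub _ _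
      _ ≤ ((2^(m-i-1) : ℕ) : ℝ) + ((2^(m-i-1) : ℕ) : ℝ) := by linarith
      _ = ((2^(m-i) : ℕ) : ℝ) := by rw [← Nat.cast_add, hpow]
  rw [hw, abs_mul, abs_of_pos hcpos, ← mul_assoc]
  calc c * c * |(∑ x ∈ Finset.Ico a (a + 2^(m-i-1)), v x)
      - ∑ x ∈ Finset.Ico (a + 2^(m-i-1)) (a + 2^(m-i)), v x|
      ≤ c * c * ((2^(m-i) : ℕ) : ℝ) := by
        have : 0 ≤ c * c := by positivity
        exact mul_le_mul_of_nonneg_left hD this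
    _ = 1 := by
        have hcast : ((m - i : ℕ) : ℝ) = (m:ℝ) - (i:ℝ) := by
          rw [Nat.cast_sub him.le]
        have := rpow_half_sq (m - i)
        rw [hcast] at this
        rw [hc]
        push_cast at this ⊢
        convert this using 3

lemma row_vanish (v : ℕ → ℝ) (m i j r : ℕ)
    (hi : Nat.log 2 r = i) (hj : r = 2^i + j) (hjlt : j < 2^i) (him : i < m)
    (hconst : ∀ y, 2^(m-i)*j ≤ y → y + 1 < 2^(m-i)*j + 2^(m-i) → v (y+1) = v y) :
    ∑ x ∈ Finset.range (2^m), haarEntry m r x * v x = 0 := by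
  have h2a : 0 < 2^(m-i-1) := by positivity
  have h2b : 0 < 2^(m-i) := by positivity
  have hpow : 2^(m-i-1) + 2^(m-i-1) = 2^(m-i) := by
    have h : 2^(m-i) = 2^(m-i-1) * 2 := by rw [← pow_succ]; congr 1; omega
    omega
  rw [ip_formula v m i j r hi hj hjlt him]
  set a := 2^(m-i)*j with ha
  have hc := const_of_no_change v a (a + 2^(m-i)) hconst
  have h1 : ∑ x ∈ Finset.Ico a (a + 2^(m-i-1)), v x = (2^(m-i-1) : ℕ) * v a := by
    rw [Finset.sum_congr rfl (fun x hx => by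
      simp only [mem_Ico] at hx
      exact hc x hx.1 (by omega))]
    rw [Finset.sum_const, Nat.card_Ico]
    simp [nsmul_eq_mul]
  have h2 : ∑ x ∈ Finset.Ico (a + 2^(m-i-1)) (a + 2^(m-i)), v x = (2^(m-i-1) : ℕ) * v a := by
    rw [Finset.sum_congr rfl (fun x hx => by
      simp only [mem_Ico] at hx
      exact hc x (by omega) (by omega))]
    rw [Finset.sum_const, Nat.card_Ico]
    have : a + 2^(m-i) - (a + 2^(m-i-1)) = 2^(m-i-1) := by omega
    rw [this]
    simp [nsmul_eq_mul]
  rw [h1, h2, sub_self, mul_zero]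

lemma support_le (m i j : ℕ) (hjlt : j < 2^i) (him : i < m) :
    2^(m-i)*j + 2^(m-i) ≤ 2^m := by
  have h1 : 2^(m-i)*j + 2^(m-i) = 2^(m-i)*(j+1) := by ring
  rw [h1]
  calc 2^(m-i)*(j+1) ≤ 2^(m-i)*2^i := Nat.mul_le_mul_left _ (by omega)
    _ = 2^m := by rw [← pow_add]; congr 1; omega


/-- If `v ∈ {±1}^n` has at most `ℓ` sign changes, `n = 2^m`, then
`∑_{i,j} 2^{-(m-i)/2} |⟨ψ_{i,j}, v⟩| ≤ ℓ·log₂ n + 1 = ℓ·m + 1`, the sum ranging over all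
wavelets of the Haar basis (including the father and mother wavelets at level 0). -/
theorem haar_weighted_l1_bound (m ℓ : ℕ) (v : ℕ → ℝ)
    (hv : ∀ i < 2 ^ m, v i = 1 ∨ v i = -1)
    (hsc : signChanges (2 ^ m) v ≤ ℓ) :
    ∑ r ∈ Finset.range (2 ^ m),
        haarWeight m r * |∑ x ∈ Finset.range (2 ^ m), haarEntry m r x * v x|
      ≤ ℓ * m + 1 := by
  have h2m : (1:ℕ) ≤ 2^m := Nat.one_le_two_pow
  have habs : ∀ x < 2^m, |v x| = 1 := fun x hx => by rcases hv x hx with h|h <;> simp [h]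
  set F : ℕ → ℝ := fun r =>
    haarWeight m r * |∑ x ∈ Finset.range (2 ^ m), haarEntry m r x * v x| with hF
  -- decomposition facts
  have hdec : ∀ r, 1 ≤ r → r < 2^m →
      Nat.log 2 r < m ∧ 2^(Nat.log 2 r) ≤ r ∧ r - 2^(Nat.log 2 r) < 2^(Nat.log 2 r) := by
    intro r h1 h2
    have hp := Nat.pow_log_le_self 2 (by omega : r ≠ 0)
    have hq := Nat.lt_pow_succ_log_self (by norm_num : 1 < 2) r
    have him : Nat.log 2 r < m := by
      by_contra h
      push_neg at h
      have : 2^m ≤ 2^(Nat.log 2 r) := Nat.pow_le_pow_right (by norm_num) h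
      omega
    have hpow : 2^(Nat.log 2 r + 1) = 2^(Nat.log 2 r) + 2^(Nat.log 2 r) := by
      rw [pow_succ]; ring
    exact ⟨him, hp, by omega⟩
  -- the father wavelet contributes at most 1
  have hF0 : F 0 ≤ 1 := by
    have hw : haarWeight m 0 = (2:ℝ)^(-(m:ℝ)/2) := by simp [haarWeight]
    have he : ∀ x, haarEntry m 0 x = (2:ℝ)^(-(m:ℝ)/2) := fun x => by simp [haarEntry]
    set c := (2:ℝ)^(-(m:ℝ)/2) with hc
    have hcpos : 0 < c := Real.rpow_pos_of_pos (by norm_num) _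
    have hsum : ∑ x ∈ Finset.range (2^m), haarEntry m 0 x * v x
        = c * ∑ x ∈ Finset.range (2^m), v x := by
      rw [Finset.mul_sum]
      exact Finset.sum_congr rfl fun x _ => by rw [he x]
    have hub : |∑ x ∈ Finset.range (2^m), v x| ≤ ((2^m : ℕ) : ℝ) := by
      calc |∑ x ∈ Finset.range (2^m), v x| ≤ ∑ x ∈ Finset.range (2^m), |v x| :=
            Finset.abs_sum_le_sum_abs _ _
        _ = ∑ x ∈ Finset.range (2^m), (1:ℝ) :=
            Finset.sum_congr rfl fun x hx => habs x (mem_range.mp hx)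
        _ = ((2^m : ℕ) : ℝ) := by simp
    have key := rpow_half_sq m
    calc F 0 = c * (c * |∑ x ∈ Finset.range (2^m), v x|) := by
          rw [hF]; simp only [hw, hsum, abs_mul, abs_of_pos hcpos]
      _ ≤ c * (c * ((2^m : ℕ) : ℝ)) := by
          have h0 : (0:ℝ) ≤ c := le_of_lt hcpos
          gcongr
      _ = 1 := by rw [← mul_assoc, hc]; push_cast at key ⊢; convert key using 3
  -- the set of sign changes
  set SC := (Finset.range (2^m - 1)).filter (fun y => v (y + 1) ≠ v y) with hSC
  have hSCcard : SC.card ≤ ℓ := hsc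
  -- set of rows with nonzero contribution
  set S := (Finset.Ico 1 (2^m)).filter (fun r => F r ≠ 0) with hS
  -- each nonzero row yields a sign change in its support
  have key : ∀ r, ∃ y, r ∈ S →
      y ∈ SC ∧ y / 2^(m - Nat.log 2 r) = r - 2^(Nat.log 2 r) := by
    intro r
    by_cases hr : r ∈ S
    · simp only [hS, Finset.mem_filter, Finset.mem_Ico] at hr
      obtain ⟨⟨hr1, hr2⟩, hrne⟩ := hr
      obtain ⟨him, hp, hjlt⟩ := hdec r hr1 hr2
      set i := Nat.log 2 r with hi
      set j := r - 2^i with hj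
      have hb := support_le m i j hjlt him
      have hipne : ∑ x ∈ Finset.range (2^m), haarEntry m r x * v x ≠ 0 := by
        intro h
        apply hrne
        rw [hF]
        simp only [h, abs_zero, mul_zero]
      have hex : ∃ y, 2^(m-i)*j ≤ y ∧ y + 1 < 2^(m-i)*j + 2^(m-i) ∧ v (y+1) ≠ v y := by
        by_contra hno
        push_neg at hno
        exact hipne (row_vanish v m i j r rfl (by omega) hjlt him hno)
      obtain ⟨y, hy1, hy2, hy3⟩ := hex
      refine ⟨y, fun _ => ⟨?_, ?_⟩⟩
      · simp only [hSC, Finset.mem_filter, Finset.mem_range]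
        exact ⟨by omega, hy3⟩
      · apply Nat.div_eq_of_lt_le
        · rw [mul_comm]; exact hy1
        · have : (j+1) * 2^(m-i) = 2^(m-i)*j + 2^(m-i) := by ring
          omega
    · exact ⟨0, fun h => absurd h hr⟩
  choose f hf using key
  -- injectivity gives the cardinality bound
  have hcard : S.card ≤ ℓ * m := by
    have h1 : S.card ≤ ((Finset.range m) ×ˢ SC).card := by
      apply Finset.card_le_card_of_injOn (fun r => (Nat.log 2 r, f r))
      · intro r hr
        have hr' : r ∈ S := hr
        simp only [hS, Finset.mem_filter, Finset.mem_Ico] at hr'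
        obtain ⟨⟨hr1, hr2⟩, _⟩ := hr'
        obtain ⟨him, _, _⟩ := hdec r hr1 hr2
        exact Finset.mem_product.mpr ⟨Finset.mem_range.mpr him, (hf r hr).1⟩
      · intro r hr r' hr' heq
        simp only [Prod.mk.injEq] at heq
        obtain ⟨hlog, hfy⟩ := heq
        have hm : r ∈ S := Finset.mem_coe.mp hr
        have hm' : r' ∈ S := Finset.mem_coe.mp hr'
        have hr2 := hm; have hr2' := hm'
        simp only [hS, Finset.mem_filter, Finset.mem_Ico] at hr2 hr2'
        obtain ⟨⟨ha1, ha2⟩, _⟩ := hr2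
        obtain ⟨⟨ha1', ha2'⟩, _⟩ := hr2'
        obtain ⟨_, hpr, _⟩ := hdec r ha1 ha2
        obtain ⟨_, hpr', _⟩ := hdec r' ha1' ha2'
        have e1 := (hf r hm).2
        have e2 := (hf r' hm').2
        rw [hfy, hlog] at e1
        rw [hlog] at hpr
        omega
    have h2 : ((Finset.range m) ×ˢ SC).card = m * SC.card := by
      rw [Finset.card_product, Finset.card_range]
    calc S.card ≤ m * SC.card := h2 ▸ h1
      _ ≤ m * ℓ := Nat.mul_le_mul_left m hSCcard
      _ = ℓ * m := Nat.mul_comm m ℓ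
  -- sum over nonzero rows
  have hrest : ∑ r ∈ Finset.Ico 1 (2^m), F r ≤ ((ℓ * m : ℕ) : ℝ) := by
    rw [← Finset.sum_filter_ne_zero (Finset.Ico 1 (2^m)) (f := F), ← hS]
    have hle1 : ∀ r ∈ S, F r ≤ 1 := by
      intro r hr
      simp only [hS, Finset.mem_filter, Finset.mem_Ico] at hr
      obtain ⟨⟨hr1, hr2⟩, _⟩ := hr
      obtain ⟨him, hp, hjlt⟩ := hdec r hr1 hr2
      exact row_bound v m (Nat.log 2 r) (r - 2^(Nat.log 2 r)) r habs rfl (by omega) hjlt him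
    calc ∑ r ∈ S, F r ≤ S.card • (1:ℝ) := Finset.sum_le_card_nsmul S F 1 hle1
      _ = (S.card : ℝ) := by simp
      _ ≤ ((ℓ * m : ℕ) : ℝ) := by exact_mod_cast hcard
  -- assemble
  have hsplit : ∑ r ∈ Finset.range (2^m), F r = F 0 + ∑ r ∈ Finset.Ico 1 (2^m), F r := by
    rw [Finset.range_eq_Ico, ← Finset.sum_Ico_consecutive F (Nat.zero_le 1) h2m]
    congr 1
    rw [show Finset.Ico 0 1 = Finset.range 1 by rw [Finset.range_eq_Ico],
      Finset.sum_range_one]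
  calc ∑ r ∈ Finset.range (2^m), F r = F 0 + ∑ r ∈ Finset.Ico 1 (2^m), F r := hsplit
    _ ≤ 1 + ((ℓ * m : ℕ) : ℝ) := add_le_add hF0 hrest
    _ ≤ ℓ * m + 1 := by push_cast; linarith
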